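/- If N is a normal subloop of a loop L, then 𝓛(N) := { α ∈ Mlt_ℓ(L) : α(x) ∈ N·x for all x ∈ L } is a normal subgroup of the left multiplication group Mlt_ℓ(L). -/

import Mathlib

/-- A loop: a binary operation with two-sided identity whose left and right
translations are bijections. -/
structure LoopStr (L : Type*) where
  mul : L → L → L
  one : L
  one_mul : ∀ x, mul one x = x
  mul_one : ∀ x, mul x one = x
  mul_left_bij : ∀ x, Function.Bijective (mul x)
  mul_right_bij : ∀ x, Function.Bijective fun y => mul y x

/-- Left translation `λ_x` as a permutation. -/
noncomputable def LoopStr.lam {L : Type*} (S : LoopStr L) (x : L) : Equiv.Perm L :=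
  Equiv.ofBijective _ (S.mul_left_bij x)

/-- Right translation `ρ_x` as a permutation. -/
noncomputable def LoopStr.rho {L : Type*} (S : LoopStr L) (x : L) : Equiv.Perm L :=
  Equiv.ofBijective _ (S.mul_right_bij x)

/-- The left multiplication group `Mlt_ℓ(L)`. -/
noncomputable def LoopStr.Mlt {L : Type*} (S : LoopStr L) : Subgroup (Equiv.Perm L) :=
  Subgroup.closure (Set.range S.lam)

/-- Left division: `ldiv a b` is the unique solution `x` of `a·x = b`. -/
noncomputable def LoopStr.ldiv {L : Type*} (S : LoopStr L) (a b : L) : L := (S.lam a).symm b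

/-- Right division: `rdiv a b` is the unique solution `x` of `x·b = a`. -/
noncomputable def LoopStr.rdiv {L : Type*} (S : LoopStr L) (a b : L) : L := (S.rho b).symm a

/-- The inner mapping `δ_{x,y} = λ_{xy}⁻¹ ∘ λ_x ∘ λ_y`. -/
noncomputable def LoopStr.delta {L : Type*} (S : LoopStr L) (x y : L) : Equiv.Perm L :=
  (S.lam (S.mul x y))⁻¹ * S.lam x * S.lam y

/-- A loop homomorphism: preserves the multiplication and the identity. -/
def IsLoopHom {L L' : Type*} (S : LoopStr L) (S' : LoopStr L') (θ : L → L') : Prop :=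
  θ S.one = S'.one ∧ ∀ x y, θ (S.mul x y) = S'.mul (θ x) (θ y)

/-- A subloop: a subset containing the identity, closed under multiplication
and both divisions. -/
def IsSubloop {L : Type*} (S : LoopStr L) (N : Set L) : Prop :=
  S.one ∈ N ∧ (∀ a ∈ N, ∀ b ∈ N, S.mul a b ∈ N) ∧
    (∀ a ∈ N, ∀ b ∈ N, S.ldiv a b ∈ N) ∧ (∀ a ∈ N, ∀ b ∈ N, S.rdiv a b ∈ N)

/-- A normal subloop: `ab·N = a·(bN) = (aN)·b` for all `a, b`. -/
def IsNormalSubloop {L : Type*} (S : LoopStr L) (N : Set L) : Prop :=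
  IsSubloop S N ∧ ∀ a b : L,
    ((fun n => S.mul (S.mul a b) n) '' N = (fun n => S.mul a (S.mul b n)) '' N) ∧
    ((fun n => S.mul (S.mul a b) n) '' N = (fun n => S.mul (S.mul a n) b) '' N)

/-- For a normal subloop `N` of `L`, the set
`𝓛(N) = { α ∈ Mlt_ℓ(L) : α(x) ∈ N·x for all x }` is a normal subgroup of
`Mlt_ℓ(L)`. -/
theorem stmt2 {L : Type*} (S : LoopStr L) (N : Set L) (hN : IsNormalSubloop S N) :
    ∃ H : Subgroup ↥S.Mlt,
      (∀ α : ↥S.Mlt, α ∈ H ↔ ∀ x : L, ∃ n ∈ N, (α : Equiv.Perm L) x = S.mul n x) ∧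
      H.Normal := by
  obtain ⟨⟨h1, hmulc, hldiv, _⟩, hnorm⟩ := hN
  set c : L → Set L := fun x => (fun n => S.mul n x) '' N with hc
  have coset_comm : ∀ b : L, (fun n => S.mul b n) '' N = (fun n => S.mul n b) '' N := by
    intro b
    have := (hnorm S.one b).2
    simpa [S.one_mul] using this
  have nN_eq : ∀ n ∈ N, (fun m => S.mul n m) '' N = N := by
    intro n hn
    apply Set.Subset.antisymm
    · rintro _ ⟨m, hm, rfl⟩; exact hmulc n hn m hm
    · intro m hm
      exact ⟨S.ldiv n m, hldiv n hn m hm, (S.lam n).apply_symm_apply m⟩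
  have mem_self : ∀ x, x ∈ c x := fun x => ⟨S.one, h1, S.one_mul x⟩
  have lam_image : ∀ a x, (S.lam a) '' (c x) = c (S.mul a x) := by
    intro a x
    calc (S.lam a) '' (c x) = (fun n => S.mul a (S.mul x n)) '' N := by
          rw [hc]; simp only [← coset_comm x, ← Set.image_comp]; rfl
      _ = (fun n => S.mul (S.mul a x) n) '' N := ((hnorm a x).1).symm
      _ = c (S.mul a x) := coset_comm _
  have c_trans : ∀ {x y : L}, x ∈ c y → c x = c y := by
    rintro _ y ⟨n, hn, rfl⟩
    calc c (S.mul n y) = (fun m => S.mul (S.mul n y) m) '' N := (coset_comm _).symm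
      _ = (fun m => S.mul (S.mul n m) y) '' N := (hnorm n y).2
      _ = (fun z => S.mul z y) '' ((fun m => S.mul n m) '' N) := by
          rw [← Set.image_comp]; rfl
      _ = c y := by rw [nN_eq n hn]
  have key : ∀ β ∈ S.Mlt, ∀ x, (β : Equiv.Perm L) '' (c x) = c (β x) := by
    intro β hβ
    induction hβ using Subgroup.closure_induction with
    | mem g hg => obtain ⟨a, rfl⟩ := hg; exact lam_image a
    | one => simp
    | mul g h _ _ hg hh =>
        intro x
        rw [show ⇑(g * h) = ⇑g ∘ ⇑h from rfl, Set.image_comp, hh x, hg (h x)]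
        rfl
    | inv g _ hg =>
        intro x
        have := hg (g⁻¹ x)
        rw [show g (g⁻¹ x) = x from Equiv.apply_symm_apply g x] at this
        rw [← this, ← Set.image_comp]
        simp
  refine ⟨{ carrier := {α : ↥S.Mlt | ∀ x, (α : Equiv.Perm L) x ∈ c x}
            one_mem' := fun x => mem_self x
            mul_mem' := ?_
            inv_mem' := ?_ }, ?_, ?_⟩
  · intro α β hα hβ x
    have : ((α * β : ↥S.Mlt) : Equiv.Perm L) x = (α : Equiv.Perm L) ((β : Equiv.Perm L) x) := rfl
    have h2 := c_trans (hβ x)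
    have h3 := hα ((β : Equiv.Perm L) x)
    rw [h2] at h3
    exact this ▸ h3
  · intro α hα x
    have hx : (α : Equiv.Perm L) (((α : Equiv.Perm L))⁻¹ x) = x :=
      Equiv.apply_symm_apply _ x
    have h2 : x ∈ c (((α : Equiv.Perm L))⁻¹ x) := by
      have h4 := hα (((α : Equiv.Perm L))⁻¹ x)
      rwa [hx] at h4
    have h3 : ((α⁻¹ : ↥S.Mlt) : Equiv.Perm L) x = ((α : Equiv.Perm L))⁻¹ x := rfl
    rw [h3, c_trans h2]
    exact mem_self _
  · intro α
    constructor
    · intro h x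
      obtain ⟨n, hn, he⟩ := h x
      exact ⟨n, hn, he.symm⟩
    · intro h x
      obtain ⟨n, hn, he⟩ := h x
      exact ⟨n, hn, he.symm⟩
  · constructor
    intro n hn g x
    have h1' : ((g * n * g⁻¹ : ↥S.Mlt) : Equiv.Perm L) x
        = (g : Equiv.Perm L) ((n : Equiv.Perm L) (((g : Equiv.Perm L))⁻¹ x)) := rfl
    rw [h1']
    have hmem : (n : Equiv.Perm L) (((g : Equiv.Perm L))⁻¹ x) ∈ c (((g : Equiv.Perm L))⁻¹ x) :=
      hn _
    have := key (g : Equiv.Perm L) g.2 (((g : Equiv.Perm L))⁻¹ x)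
    have : (g : Equiv.Perm L) ((n : Equiv.Perm L) (((g : Equiv.Perm L))⁻¹ x))
        ∈ c ((g : Equiv.Perm L) (((g : Equiv.Perm L))⁻¹ x)) := by
      rw [← this]; exact ⟨_, hmem, rfl⟩
    rwa [show (g : Equiv.Perm L) (((g : Equiv.Perm L))⁻¹ x) = x from Equiv.apply_symm_apply _ x] at this
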